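/- Let N be an odd positive integer, θ ∈ (0, π/2), k ∈ {0, 1, …, 2N−1}, λ_k = exp(πik/N), C = 2N/(1 + (−1)^k·cos^N θ), and let ρ_k be the 2×2 matrix with entries (ρ_k)_{c,c'} = (1/C)·Σ_{n=0}^{N−1} v_c(n)·conj(v_{c'}(n)), where v_0(n) = a_n(λ_k) and v_1(n) = b_n(λ_k). Then the eigenvalues of ρ_k are μ_± = (1 ± cos^(N−1)θ)/2; in particular they are independent of k, so every eigenstate of the walk has the same coin–walker entanglement. -/

import Mathlib

open Complex

/-- `ω = exp(2πi/N)`. -/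
noncomputable def omegaN (N : ℕ) : ℂ := Complex.exp (2 * Real.pi * Complex.I / N)

/-- `a_n(λ) = ω^(−n(n−1)/2) · ∏_{j=0}^{n−1} (1 + λ⁻¹ωʲ/cosθ)/(1 + λω⁻ʲ/cosθ)`. -/
noncomputable def aCoef (N : ℕ) (θ : ℝ) (lam : ℂ) (n : ℕ) : ℂ :=
  (omegaN N)⁻¹ ^ (n * (n - 1) / 2) *
    ∏ j ∈ Finset.range n,
      (1 + lam⁻¹ * omegaN N ^ j / (Real.cos θ : ℂ)) /
      (1 + lam * (omegaN N)⁻¹ ^ j / (Real.cos θ : ℂ))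

/-- `b_n(λ) = a_n(λ)·tanθ/(1 + λω⁻ⁿ/cosθ)`. -/
noncomputable def bCoef (N : ℕ) (θ : ℝ) (lam : ℂ) (n : ℕ) : ℂ :=
  aCoef N θ lam n * (Real.tan θ : ℂ) / (1 + lam * (omegaN N)⁻¹ ^ n / (Real.cos θ : ℂ))

/-- The reduced density matrix of the coin in the normalized eigenstate with
eigenvalue `λ`: `(ρ)_{c,c'} = (1/C)·Σ_{n<N} v_c(n)·conj(v_{c'}(n))` where
`v_0(n) = a_n(λ)` and `v_1(n) = b_n(λ)`. -/
noncomputable def coinRho (N : ℕ) (θ : ℝ) (lam : ℂ) (C : ℂ) :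
    Matrix (Fin 2) (Fin 2) ℂ := fun c c' =>
  (1 / C) * ∑ n ∈ Finset.range N,
    (if c = 0 then aCoef N θ lam n else bCoef N θ lam n) *
      (starRingEnd ℂ) (if c' = 0 then aCoef N θ lam n else bCoef N θ lam n)

-- auxiliary lemmas
lemma one_add_ne_zero' {u : ℂ} (h : ‖u‖ ≠ 1) : 1 + u ≠ 0 := by
  intro h0
  apply h
  have : u = -1 := by linear_combination h0
  simp [this]

lemma abs_pow_ne_one' {z : ℂ} (h : ‖z‖ ≠ 1) {N : ℕ} (hN : N ≠ 0) :
    ‖z ^ N‖ ≠ 1 := by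
  rw [norm_pow]
  rcases h.lt_or_gt with h1 | h1
  · exact ne_of_lt (pow_lt_one₀ (norm_nonneg z) h1 hN)
  · exact ne_of_gt (one_lt_pow₀ h1 hN)

lemma sum_inv_one_add' {N : ℕ} (hN : Odd N) {ζ : ℂ} (hζ : IsPrimitiveRoot ζ N)
    {z : ℂ} (hz : ‖z‖ ≠ 1) :
    ∑ n ∈ Finset.range N, (1 + z * ζ ^ n)⁻¹ = N / (1 + z ^ N) := by
  have hN0 : N ≠ 0 := hN.pos.ne'
  have habsζ : ‖ζ‖ = 1 := Complex.norm_eq_one_of_pow_eq_one hζ.pow_eq_one hN0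
  have hzN : (1 : ℂ) + z ^ N ≠ 0 := one_add_ne_zero' (abs_pow_ne_one' hz hN0)
  have hterm : ∀ n, (1 : ℂ) + z * ζ ^ n ≠ 0 := fun n =>
    one_add_ne_zero' (by rw [norm_mul, norm_pow, habsζ, one_pow, mul_one]; exact hz)
  have key : ∀ n ∈ Finset.range N,
      (1 + z * ζ ^ n)⁻¹ = (∑ j ∈ Finset.range N, (-z) ^ j * (ζ ^ j) ^ n) / (1 + z ^ N) := by
    intro n _
    have h1 : (1 + z * ζ ^ n) * ∑ j ∈ Finset.range N, (-(z * ζ ^ n)) ^ j = 1 + z ^ N := by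
      have h2 := geom_sum_mul (-(z * ζ ^ n)) N
      have h3 : (-(z * ζ ^ n)) ^ N = -(z ^ N) := by
        rw [hN.neg_pow, mul_pow, ← pow_mul, mul_comm n N, pow_mul, hζ.pow_eq_one, one_pow, mul_one]
      rw [h3] at h2
      linear_combination -h2
    have h4 : ∀ j, (-(z * ζ ^ n)) ^ j = (-z) ^ j * (ζ ^ j) ^ n := by
      intro j
      rw [neg_mul_eq_neg_mul, mul_pow, ← pow_mul, ← pow_mul, mul_comm j n]
    simp only [h4] at h1
    rw [eq_div_iff hzN, ← h1, inv_mul_cancel_left₀ (hterm n)]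
  rw [Finset.sum_congr rfl key, ← Finset.sum_div]
  congr 1
  rw [Finset.sum_comm]
  rw [Finset.sum_eq_single 0]
  · simp
  · intro j hj hj0
    rw [← Finset.mul_sum, geom_sum_eq, ← pow_mul, mul_comm j N, pow_mul, hζ.pow_eq_one,
      one_pow, sub_self, zero_div, mul_zero]
    exact hζ.pow_ne_one_of_pos_of_lt hj0 (Finset.mem_range.mp hj)
  · intro h; simp at h; omega

lemma partial_frac' {c w : ℂ} (hc : c ≠ 0) (hw : w ≠ 0) (hc2 : c * c - 1 ≠ 0)
    (h1 : 1 + w / c ≠ 0) (h2 : 1 + w⁻¹ / c ≠ 0) (h3 : 1 + c * w ≠ 0) :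
    (1 + w / c)⁻¹ * (1 + w⁻¹ / c)⁻¹
      = c * c / (c * c - 1) * ((1 + w / c)⁻¹ - (1 + c * w)⁻¹) := by
  have S1 : 1 + w / c = (c + w) / c := by field_simp
  have S2 : 1 + w⁻¹ / c = (1 + c * w) / (c * w) := by
    field_simp
    ring
  have hcw : c + w ≠ 0 := by
    intro h
    apply h1
    rw [S1, h, zero_div]
  rw [S1, S2, inv_div, inv_div]
  have hc2' : c ^ 2 - 1 ≠ 0 := by rw [sq]; exact hc2
  field_simp
  ring


set_option maxHeartbeats 1600000 in
/-- the eigenvalues of the coin reduced density matrix `ρ_k` are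
`μ_± = (1 ± cos^(N−1)θ)/2` (its characteristic polynomial is
`(X − μ₊)(X − μ₋)`); in particular they do not depend on `k`. -/
theorem psw_coin_rho_eigenvalues (N : ℕ) [NeZero N] (hN : Odd N)
    (θ : ℝ) (hθ : θ ∈ Set.Ioo 0 (Real.pi / 2))
    (k : ℕ) (hk : k < 2 * N)
    (lam : ℂ) (hlam : lam = Complex.exp (Real.pi * Complex.I * k / N))
    (C : ℂ) (hC : C = 2 * N / (1 + (-1 : ℂ) ^ k * (Real.cos θ : ℂ) ^ N)) :
    (coinRho N θ lam C).charpoly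
      = (Polynomial.X - Polynomial.C (((1 + Real.cos θ ^ (N - 1)) / 2 : ℝ) : ℂ)) *
        (Polynomial.X - Polynomial.C (((1 - Real.cos θ ^ (N - 1)) / 2 : ℝ) : ℂ)) := by

  obtain ⟨hθ0, hθ2⟩ := hθ
  have hN0 : N ≠ 0 := NeZero.ne N
  have hc0 : 0 < Real.cos θ := Real.cos_pos_of_mem_Ioo ⟨by linarith [Real.pi_pos], hθ2⟩
  have hsin0 : 0 < Real.sin θ := Real.sin_pos_of_pos_of_lt_pi hθ0 (by linarith [Real.pi_pos])
  have hc1 : Real.cos θ < 1 := by nlinarith [Real.sin_sq_add_cos_sq θ]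
  have hNC : (N : ℂ) ≠ 0 := Nat.cast_ne_zero.mpr hN0
  set ω := omegaN N with hω
  have hprim : IsPrimitiveRoot ω N := Complex.isPrimitiveRoot_exp N hN0
  have hω0 : ω ≠ 0 := hprim.ne_zero hN0
  have habsω : ‖ω‖ = 1 :=
    Complex.norm_eq_one_of_pow_eq_one hprim.pow_eq_one hN0
  have habslam : ‖lam‖ = 1 := by
    rw [hlam, show (Real.pi : ℂ) * Complex.I * k / N = ((Real.pi * k / N : ℝ) : ℂ) * Complex.I by
      push_cast; ring]
    exact Complex.norm_exp_ofReal_mul_I _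
  have hclam : (starRingEnd ℂ) lam = lam⁻¹ := by
    rw [hlam, ← Complex.exp_conj, ← Complex.exp_neg]
    congr 1
    simp [map_div₀, Complex.conj_I, map_ofNat]
    ring
  have hcω : (starRingEnd ℂ) ω = ω⁻¹ := by
    rw [hω, omegaN, ← Complex.exp_conj, ← Complex.exp_neg]
    congr 1
    simp [map_div₀, Complex.conj_I, map_ofNat]
    ring
  have hlamN : lam ^ N = (-1 : ℂ) ^ k := by
    rw [hlam, ← Complex.exp_nat_mul, show (N : ℂ) * (Real.pi * Complex.I * k / N)
        = k * (Real.pi * Complex.I) by field_simp, Complex.exp_nat_mul,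
      Complex.exp_pi_mul_I]
  obtain ⟨cc, hcc⟩ : ∃ x : ℂ, x = (Real.cos θ : ℂ) := ⟨_, rfl⟩
  obtain ⟨t, ht⟩ : ∃ x : ℂ, x = (Real.tan θ : ℂ) := ⟨_, rfl⟩
  rw [← hcc] at hC
  have hccabs : ‖cc‖ = Real.cos θ := by
    rw [hcc, Complex.norm_real, Real.norm_eq_abs, abs_of_pos hc0]
  have hcc0 : cc ≠ 0 := by rw [hcc]; exact_mod_cast ne_of_gt hc0
  have hAin : ∀ n : ℕ, ‖lam⁻¹ * ω ^ n / cc‖ ≠ 1 := by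
    intro n
    rw [norm_div, norm_mul, norm_inv, norm_pow, habslam, habsω, hccabs]
    simp only [inv_one, one_pow, one_mul]
    rw [one_div]; exact ne_of_gt ((one_lt_inv₀ hc0).mpr hc1)
  have hBin : ∀ n : ℕ, ‖lam * (ω⁻¹) ^ n / cc‖ ≠ 1 := by
    intro n
    rw [norm_div, norm_mul, norm_pow, norm_inv, habslam, habsω, hccabs]
    simp only [inv_one, one_pow, one_mul]
    rw [one_div]; exact ne_of_gt ((one_lt_inv₀ hc0).mpr hc1)
  have hAne : ∀ n, (1 : ℂ) + lam⁻¹ * ω ^ n / cc ≠ 0 := fun n => one_add_ne_zero' (hAin n)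
  have hBne : ∀ n, (1 : ℂ) + lam * (ω⁻¹) ^ n / cc ≠ 0 := fun n => one_add_ne_zero' (hBin n)
  have hcωi : (starRingEnd ℂ) ω⁻¹ = ω := by rw [map_inv₀, hcω, inv_inv]
  have hconjA : ∀ j : ℕ, (starRingEnd ℂ) (1 + lam⁻¹ * ω ^ j / cc) = 1 + lam * (ω⁻¹) ^ j / cc := by
    intro j
    rw [map_add, map_one, map_div₀, map_mul, map_inv₀, map_pow, hclam, hcω, inv_inv, hcc,
      Complex.conj_ofReal]
  have hconjB : ∀ j : ℕ, (starRingEnd ℂ) (1 + lam * (ω⁻¹) ^ j / cc) = 1 + lam⁻¹ * ω ^ j / cc := by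
    intro j
    rw [map_add, map_one, map_div₀, map_mul, map_pow, hcωi, hclam, hcc, Complex.conj_ofReal]
  have haa : ∀ n : ℕ, aCoef N θ lam n * (starRingEnd ℂ) (aCoef N θ lam n) = 1 := by
    intro n
    rw [aCoef, ← hω, ← hcc, map_mul, map_pow, map_prod, mul_mul_mul_comm, ← mul_pow, hcωi,
      inv_mul_cancel₀ hω0, one_pow, one_mul, ← Finset.prod_mul_distrib]
    apply Finset.prod_eq_one
    intro j _
    rw [map_div₀, hconjA, hconjB, div_mul_div_comm, mul_comm, div_self
      (mul_ne_zero (hBne j) (hAne j))]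
  have hconjt : (starRingEnd ℂ) t = t := by rw [ht, Complex.conj_ofReal]
  have hab : ∀ n : ℕ, aCoef N θ lam n * (starRingEnd ℂ) (bCoef N θ lam n)
      = t * (1 + lam⁻¹ * ω ^ n / cc)⁻¹ := by
    intro n
    rw [bCoef, ← hω, ← hcc, ← ht, map_div₀, map_mul, hconjB n, hconjt]
    linear_combination (t * (1 + lam⁻¹ * ω ^ n / cc)⁻¹) * haa n
  have hba : ∀ n : ℕ, bCoef N θ lam n * (starRingEnd ℂ) (aCoef N θ lam n)
      = t * (1 + lam * (ω⁻¹) ^ n / cc)⁻¹ := by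
    intro n
    rw [bCoef, ← hω, ← hcc, ← ht]
    linear_combination (t * (1 + lam * (ω⁻¹) ^ n / cc)⁻¹) * haa n
  have hbb : ∀ n : ℕ, bCoef N θ lam n * (starRingEnd ℂ) (bCoef N θ lam n)
      = t * t * ((1 + lam * (ω⁻¹) ^ n / cc)⁻¹ * (1 + lam⁻¹ * ω ^ n / cc)⁻¹) := by
    intro n
    rw [bCoef, ← hω, ← hcc, ← ht, map_div₀, map_mul, hconjB n, hconjt]
    linear_combination (t * t * ((1 + lam * (ω⁻¹) ^ n / cc)⁻¹ * (1 + lam⁻¹ * ω ^ n / cc)⁻¹)) * haa n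
  have hlamNi : (lam⁻¹) ^ N = (-1 : ℂ) ^ k := by
    rw [inv_pow, hlamN, ← inv_pow, inv_neg, inv_one]
  have hS1 : ∑ n ∈ Finset.range N, (1 + lam⁻¹ * ω ^ n / cc)⁻¹
      = N / (1 + (-1 : ℂ) ^ k / cc ^ N) := by
    have hz : ‖lam⁻¹ / cc‖ ≠ 1 := by
      rw [norm_div, norm_inv, habslam, hccabs, inv_one, one_div]
      exact ne_of_gt ((one_lt_inv₀ hc0).mpr hc1)
    have h := sum_inv_one_add' hN hprim hz
    rw [div_pow, hlamNi] at h
    rw [← h]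
    apply Finset.sum_congr rfl
    intro n _
    rw [div_mul_eq_mul_div]
  have hS2 : ∑ n ∈ Finset.range N, (1 + lam * (ω⁻¹) ^ n / cc)⁻¹
      = N / (1 + (-1 : ℂ) ^ k / cc ^ N) := by
    have hz : ‖lam / cc‖ ≠ 1 := by
      rw [norm_div, habslam, hccabs, one_div]
      exact ne_of_gt ((one_lt_inv₀ hc0).mpr hc1)
    have h := sum_inv_one_add' hN hprim.inv hz
    rw [div_pow, hlamN] at h
    rw [← h]
    apply Finset.sum_congr rfl
    intro n _
    rw [div_mul_eq_mul_div]
  have hS3 : ∑ n ∈ Finset.range N, (1 + cc * (lam * (ω⁻¹) ^ n))⁻¹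
      = N / (1 + cc ^ N * (-1 : ℂ) ^ k) := by
    have hz : ‖cc * lam‖ ≠ 1 := by
      rw [norm_mul, hccabs, habslam, mul_one]
      exact ne_of_lt hc1
    have h := sum_inv_one_add' hN hprim.inv hz
    rw [mul_pow, hlamN] at h
    rw [← h]
    apply Finset.sum_congr rfl
    intro n _
    rw [mul_assoc]
  have hcc2 : cc * cc - 1 ≠ 0 := by
    rw [hcc, ← Complex.ofReal_mul, ← Complex.ofReal_one, ← Complex.ofReal_sub]
    exact_mod_cast ne_of_lt (by nlinarith : Real.cos θ * Real.cos θ - 1 < 0)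
  have hcc2' : cc ^ 2 - 1 ≠ 0 := by rw [sq]; exact hcc2
  have ht2 : t * t = (1 - cc * cc) / (cc * cc) := by
    have hreal : Real.tan θ * Real.tan θ
        = (1 - Real.cos θ * Real.cos θ) / (Real.cos θ * Real.cos θ) := by
      rw [Real.tan_eq_sin_div_cos, div_mul_div_comm]
      rw [div_eq_div_iff (by positivity) (by positivity)]
      nlinarith [Real.sin_sq_add_cos_sq θ]
    rw [ht, hcc, ← Complex.ofReal_mul, hreal]
    push_cast
    ring
  have hlam0 : lam ≠ 0 := by
    intro h
    rw [h] at habslam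
    simp at habslam
  -- entries
  have E00 : coinRho N θ lam C 0 0 = (1 / C) * N := by
    have e : coinRho N θ lam C 0 0 = (1 / C) * ∑ n ∈ Finset.range N,
        aCoef N θ lam n * (starRingEnd ℂ) (aCoef N θ lam n) := rfl
    rw [e, Finset.sum_congr rfl (fun n _ => haa n), Finset.sum_const, Finset.card_range,
      nsmul_eq_mul, mul_one]
  have E01 : coinRho N θ lam C 0 1 = (1 / C) * (t * (N / (1 + (-1 : ℂ) ^ k / cc ^ N))) := by
    have e : coinRho N θ lam C 0 1 = (1 / C) * ∑ n ∈ Finset.range N,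
        aCoef N θ lam n * (starRingEnd ℂ) (bCoef N θ lam n) := rfl
    rw [e, Finset.sum_congr rfl (fun n _ => hab n), ← Finset.mul_sum, hS1]
  have E10 : coinRho N θ lam C 1 0 = (1 / C) * (t * (N / (1 + (-1 : ℂ) ^ k / cc ^ N))) := by
    have e : coinRho N θ lam C 1 0 = (1 / C) * ∑ n ∈ Finset.range N,
        bCoef N θ lam n * (starRingEnd ℂ) (aCoef N θ lam n) := rfl
    rw [e, Finset.sum_congr rfl (fun n _ => hba n), ← Finset.mul_sum, hS2]
  have E11 : coinRho N θ lam C 1 1 = (1 / C) * (t * t * (cc * cc / (cc * cc - 1) *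
      (N / (1 + (-1 : ℂ) ^ k / cc ^ N) - N / (1 + cc ^ N * (-1 : ℂ) ^ k)))) := by
    have e : coinRho N θ lam C 1 1 = (1 / C) * ∑ n ∈ Finset.range N,
        bCoef N θ lam n * (starRingEnd ℂ) (bCoef N θ lam n) := rfl
    have hpf : ∀ n ∈ Finset.range N,
        (1 + lam * (ω⁻¹) ^ n / cc)⁻¹ * (1 + lam⁻¹ * ω ^ n / cc)⁻¹
        = cc * cc / (cc * cc - 1) *
          ((1 + lam * (ω⁻¹) ^ n / cc)⁻¹ - (1 + cc * (lam * (ω⁻¹) ^ n))⁻¹) := by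
      intro n _
      have hw0 : lam * (ω⁻¹) ^ n ≠ 0 := mul_ne_zero hlam0 (pow_ne_zero _ (inv_ne_zero hω0))
      have hwi : (lam * (ω⁻¹) ^ n)⁻¹ = lam⁻¹ * ω ^ n := by
        rw [mul_inv, inv_pow, inv_inv]
      have h3 : 1 + cc * (lam * (ω⁻¹) ^ n) ≠ 0 := by
        apply one_add_ne_zero'
        rw [norm_mul, norm_mul, norm_pow, norm_inv, hccabs, habslam, habsω, inv_one, one_pow,
          mul_one, mul_one]
        exact ne_of_lt hc1
      have h2' : 1 + (lam * (ω⁻¹) ^ n)⁻¹ / cc ≠ 0 := by rw [hwi]; exact hAne n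
      have h := partial_frac' hcc0 hw0 hcc2 (hBne n) h2' h3
      rw [hwi] at h
      exact h
    rw [e, Finset.sum_congr rfl (fun n _ => hbb n), ← Finset.mul_sum,
      Finset.sum_congr rfl hpf, ← Finset.mul_sum, Finset.sum_sub_distrib, hS2, hS3]
  -- final assembly
  have hccN0 : cc ^ N ≠ 0 := by rw [hcc]; exact pow_ne_zero _ (by exact_mod_cast ne_of_gt hc0)
  have hcN1 : Real.cos θ ^ N < 1 := pow_lt_one₀ (le_of_lt hc0) hc1 hN0
  have hp1 : (1 : ℂ) + cc ^ N ≠ 0 := by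
    rw [hcc, ← Complex.ofReal_pow, ← Complex.ofReal_one, ← Complex.ofReal_add]
    exact_mod_cast ne_of_gt (by positivity : (0:ℝ) < 1 + Real.cos θ ^ N)
  have hm1 : (1 : ℂ) - cc ^ N ≠ 0 := by
    rw [hcc, ← Complex.ofReal_pow, ← Complex.ofReal_one, ← Complex.ofReal_sub]
    exact_mod_cast ne_of_gt (by nlinarith : (0:ℝ) < 1 - Real.cos θ ^ N)
  have hxN : cc ^ N = cc ^ (N - 1) * cc := by
    rw [← pow_succ, Nat.sub_add_cancel hN.pos]
  have hpcast : ((((1 + Real.cos θ ^ (N - 1)) / 2 : ℝ)) : ℂ) = (1 + cc ^ (N - 1)) / 2 := by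
    rw [hcc]; push_cast; ring
  have hqcast : ((((1 - Real.cos θ ^ (N - 1)) / 2 : ℝ)) : ℂ) = (1 - cc ^ (N - 1)) / 2 := by
    rw [hcc]; push_cast; ring
  have expand : ∀ a d b b' p q : ℂ, a + d = p + q → a * d - b * b' = p * q →
      (Polynomial.X - Polynomial.C a) * (Polynomial.X - Polynomial.C d)
        - (-Polynomial.C b) * (-Polynomial.C b')
      = (Polynomial.X - Polynomial.C p) * (Polynomial.X - Polynomial.C q) := by
    intro a d b b' p q h1 h2
    have e1 : Polynomial.C a + Polynomial.C d = Polynomial.C p + Polynomial.C q := by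
      rw [← map_add, ← map_add, h1]
    have e2 : Polynomial.C a * Polynomial.C d - Polynomial.C b * Polynomial.C b'
        = Polynomial.C p * Polynomial.C q := by
      rw [← map_mul, ← map_mul, ← map_mul, ← map_sub, h2]
    linear_combination (-(Polynomial.X : Polynomial ℂ)) * e1 + e2
  have d1 : (1 : ℂ) + 1 / cc ^ N = (1 + cc ^ N) / cc ^ N := by field_simp; ring
  have d1' : (1 : ℂ) + -1 / cc ^ N = -((1 - cc ^ N) / cc ^ N) := by field_simp; ring
  have stepA : ∀ Z : ℂ, (1 - cc * cc) / (cc * cc) * (cc * cc / (cc * cc - 1) * Z) = -Z := by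
    intro Z
    field_simp
    ring
  rcases Nat.even_or_odd k with hpar | hpar
  · -- even k
    simp only [hpar.neg_one_pow, one_mul, mul_one] at E01 E10 E11 hC
    rw [d1, div_div_eq_mul_div] at E01 E10 E11
    have E00' : coinRho N θ lam C 0 0 = (1 + cc ^ N) / 2 := by
      rw [E00, hC]
      field_simp
    have E01' : coinRho N θ lam C 0 1 = t * cc ^ N / 2 := by
      rw [E01, hC]
      field_simp
    have E10' : coinRho N θ lam C 1 0 = t * cc ^ N / 2 := by
      rw [E10, hC]
      field_simp
    have E11' : coinRho N θ lam C 1 1 = (1 - cc ^ N) / 2 := by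
      rw [E11, hC, ht2]
      field_simp
      ring
    rw [Matrix.charpoly, Matrix.det_fin_two, Matrix.charmatrix_apply_eq,
      Matrix.charmatrix_apply_eq, Matrix.charmatrix_apply_ne _ _ _ (by decide),
      Matrix.charmatrix_apply_ne _ _ _ (by decide), E00', E01', E10', E11']
    apply expand
    · rw [hpcast, hqcast]; ring
    · rw [hpcast, hqcast,
        show t * cc ^ N / 2 * (t * cc ^ N / 2) = t * t * (cc ^ N * cc ^ N / 4) from by ring,
        ht2, hxN]
      field_simp
      ring
  · -- odd k
    have hm1' : (1 : ℂ) + -cc ^ N ≠ 0 := by rw [← sub_eq_add_neg]; exact hm1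
    simp only [hpar.neg_one_pow, neg_one_mul, mul_neg_one] at E01 E10 E11 hC
    rw [d1', div_neg, div_div_eq_mul_div] at E01 E10 E11
    have E00' : coinRho N θ lam C 0 0 = (1 - cc ^ N) / 2 := by
      rw [E00, hC]
      field_simp
      ring
    have E01' : coinRho N θ lam C 0 1 = -(t * cc ^ N / 2) := by
      rw [E01, hC]
      field_simp
      ring
    have E10' : coinRho N θ lam C 1 0 = -(t * cc ^ N / 2) := by
      rw [E10, hC]
      field_simp
      ring
    have stepBo : -(↑N * cc ^ N / (1 - cc ^ N)) - ↑N / (1 + -cc ^ N)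
        = -(↑N * (1 + cc ^ N) / (1 - cc ^ N)) := by
      rw [← sub_eq_add_neg]
      field_simp
      ring
    have E11' : coinRho N θ lam C 1 1 = (1 + cc ^ N) / 2 := by
      rw [E11, hC, ht2, stepBo, stepA]
      field_simp
      ring
    rw [Matrix.charpoly, Matrix.det_fin_two, Matrix.charmatrix_apply_eq,
      Matrix.charmatrix_apply_eq, Matrix.charmatrix_apply_ne _ _ _ (by decide),
      Matrix.charmatrix_apply_ne _ _ _ (by decide), E00', E01', E10', E11']
    apply expand
    · rw [hpcast, hqcast]; ring
    · rw [hpcast, hqcast,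
        show -(t * cc ^ N / 2) * -(t * cc ^ N / 2) = t * t * (cc ^ N * cc ^ N / 4) from by ring,
        ht2, hxN]
      field_simp
      ring
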